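/- Let g : [0, ∞) → {1, 2, 3, …} be right-continuous and nondecreasing with g(u) → ∞ as u → ∞, let g⁻¹(n) = inf{u ≥ 0 : g(u) ≥ n}, and let D be the positive-integer-valued random variable with P(D ≥ n) = 1 − exp(−1/g⁻¹(n)) for all n ≥ 1. If lim_{n→∞} n·P(D ≥ n) = c for some 0 < c < ∞, then lim_{x→∞} g(x)/x = c. -/

import Mathlib

open Filter

/-- `g⁻¹(n) = inf {u ≥ 0 : g(u) ≥ n}`. -/
noncomputable def ginv (g : ℝ → ℕ) (n : ℕ) : ℝ := sInf {u : ℝ | 0 ≤ u ∧ n ≤ g u}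

/-- `P(D ≥ n)` for `D = g(1/X)`, `X` a rate-1 exponential:
`P(D ≥ n) = 1 − exp(−1/g⁻¹(n))` (equal to `1` when `g⁻¹(n) = 0`). -/
noncomputable def tailP (g : ℝ → ℕ) (n : ℕ) : ℝ :=
  if ginv g n = 0 then 1 else 1 - Real.exp (-1 / ginv g n)

lemma ginv_nonneg (g : ℝ → ℕ) (n : ℕ) : 0 ≤ ginv g n :=
  Real.sInf_nonneg (fun _ hx => hx.1)

lemma ginv_le (g : ℝ → ℕ) {n : ℕ} {x : ℝ} (hx : 0 ≤ x) (hgx : n ≤ g x) :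
    ginv g n ≤ x :=
  csInf_le ⟨0, fun _ hy => hy.1⟩ ⟨hx, hgx⟩

lemma le_g_ginv (g : ℝ → ℕ)
    (hrc : ∀ x, 0 ≤ x → ContinuousWithinAt g (Set.Ici x) x)
    (hinf : Tendsto g atTop atTop) (n : ℕ) : n ≤ g (ginv g n) := by
  obtain ⟨x, hgx, hx0⟩ := ((hinf.eventually_ge_atTop n).and (eventually_ge_atTop (0:ℝ))).exists
  have hne : {u : ℝ | 0 ≤ u ∧ n ≤ g u}.Nonempty := ⟨x, hx0, hgx⟩
  set I := ginv g n with hI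
  have hI0 : 0 ≤ I := ginv_nonneg g n
  have hcont := hrc I hI0
  have hev : ∀ᶠ u in nhdsWithin I (Set.Ici I), g u = g I := by
    have : {g I} ∈ nhds (g I) := (isOpen_discrete {g I}).mem_nhds rfl
    exact hcont this
  rcases Metric.mem_nhdsWithin_iff.mp hev with ⟨ε, εpos, hball⟩
  obtain ⟨u, huS, hult⟩ := Real.lt_sInf_add_pos hne εpos
  have hIu : I ≤ u := csInf_le ⟨0, fun _ hy => hy.1⟩ huS
  have hIdef : sInf {u : ℝ | 0 ≤ u ∧ n ≤ g u} = I := rfl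
  rw [hIdef] at hult
  have hmem : u ∈ Metric.ball I ε ∩ Set.Ici I := by
    constructor
    · rw [Metric.mem_ball, Real.dist_eq, abs_of_nonneg (by linarith)]
      linarith [hult]
    · exact hIu
  have : g u = g I := hball hmem
  calc n ≤ g u := huS.2
    _ = g I := this

lemma ginv_le_iff (g : ℝ → ℕ)
    (hmono : MonotoneOn g (Set.Ici 0))
    (hrc : ∀ x, 0 ≤ x → ContinuousWithinAt g (Set.Ici x) x)
    (hinf : Tendsto g atTop atTop) {n : ℕ} {x : ℝ} (hx : 0 ≤ x) :
    ginv g n ≤ x ↔ n ≤ g x := by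
  constructor
  · intro h
    exact le_trans (le_g_ginv g hrc hinf n) (hmono (ginv_nonneg g n) hx h)
  · intro h
    exact ginv_le g hx h

/-- If `g : [0,∞) → {1,2,…}` is right-continuous, nondecreasing, tends to `∞`, and the
random variable `D` with `P(D ≥ n) = 1 − exp(−1/g⁻¹(n))` satisfies `n·P(D ≥ n) → c` with
`0 < c < ∞`, then `g(x)/x → c` as `x → ∞`. -/
theorem g_div_x_tendsto (g : ℝ → ℕ)
    (hg1 : ∀ x, 0 ≤ x → 1 ≤ g x)
    (hmono : MonotoneOn g (Set.Ici 0))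
    (hrc : ∀ x, 0 ≤ x → ContinuousWithinAt g (Set.Ici x) x)
    (hinf : Tendsto g atTop atTop)
    (c : ℝ) (hc : 0 < c)
    (htail : Tendsto (fun n : ℕ => (n : ℝ) * tailP g n) atTop (nhds c)) :
    Tendsto (fun x : ℝ => (g x : ℝ) / x) atTop (nhds c) := by
  -- Step 1: tailP → 0
  have htail0 : Tendsto (fun n : ℕ => tailP g n) atTop (nhds 0) := by
    have h0 : Tendsto (fun n : ℕ => ((n : ℝ))⁻¹) atTop (nhds 0) := by
      simpa [one_div] using (tendsto_one_div_atTop_nhds_zero_nat : Tendsto (fun n : ℕ => 1 / (n : ℝ)) atTop (nhds 0))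
    have h1 : Tendsto (fun n : ℕ => ((n : ℝ))⁻¹ * ((n : ℝ) * tailP g n)) atTop
        (nhds (0 * c)) := h0.mul htail
    rw [zero_mul] at h1
    refine h1.congr' ?_
    filter_upwards [eventually_ge_atTop 1] with n hn
    have : (n : ℝ) ≠ 0 := Nat.cast_ne_zero.mpr (by omega)
    field_simp
  -- Step 2: eventually ginv > 0
  have hpos : ∀ᶠ n : ℕ in atTop, 0 < ginv g n := by
    have := htail0.eventually (eventually_lt_nhds (by norm_num : (0:ℝ) < 1))
    filter_upwards [this] with n hn
    rcases eq_or_lt_of_le (ginv_nonneg g n) with h | h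
    · exfalso
      rw [tailP, if_pos h.symm] at hn
      exact lt_irrefl 1 hn
    · exact h
  -- Step 3: exp(-1/ginv) → 1
  have hexp : Tendsto (fun n : ℕ => Real.exp (-1 / ginv g n)) atTop (nhds 1) := by
    have h1 : Tendsto (fun n : ℕ => 1 - tailP g n) atTop (nhds (1 - 0)) :=
      tendsto_const_nhds.sub htail0
    rw [sub_zero] at h1
    refine h1.congr' ?_
    filter_upwards [hpos] with n hn
    simp [tailP, if_neg (ne_of_gt hn)]
  -- Step 4: 1/ginv → 0
  have hinv0 : Tendsto (fun n : ℕ => 1 / ginv g n) atTop (nhds 0) := by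
    have hlog : Tendsto (fun n : ℕ => Real.log (Real.exp (-1 / ginv g n))) atTop
        (nhds (Real.log 1)) :=
      (Real.continuousAt_log one_ne_zero).tendsto.comp hexp
    rw [Real.log_one] at hlog
    have h2 : Tendsto (fun n : ℕ => -1 / ginv g n) atTop (nhds 0) := by
      refine hlog.congr ?_
      intro n; rw [Real.log_exp]
    have := h2.neg
    rw [neg_zero] at this
    refine this.congr ?_
    intro n; rw [neg_div, neg_neg]
  -- Step 5: ginv → ∞
  have hginvTop : Tendsto (fun n : ℕ => ginv g n) atTop atTop := by
    have h1 : Tendsto (fun n : ℕ => (ginv g n)⁻¹) atTop (nhdsWithin 0 (Set.Ioi 0)) := by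
      rw [tendsto_nhdsWithin_iff]
      constructor
      · simpa [one_div] using hinv0
      · filter_upwards [hpos] with n hn using inv_pos.mpr hn
    have := h1.inv_tendsto_nhdsGT_zero
    refine this.congr fun n => ?_
    simp
  -- Step 6: (1 - exp(-t_n))/t_n → 1 where t_n = 1/ginv n
  have hslope : Tendsto (fun n : ℕ => (1 - Real.exp (-1 / ginv g n)) / (1 / ginv g n))
      atTop (nhds 1) := by
    have hd : HasDerivAt Real.exp 1 0 := by simpa using Real.hasDerivAt_exp 0
    have hs := hasDerivAt_iff_tendsto_slope.mp hd
    have harg : Tendsto (fun n : ℕ => -(1 / ginv g n)) atTop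
        (nhdsWithin 0 {(0:ℝ)}ᶜ) := by
      rw [tendsto_nhdsWithin_iff]
      constructor
      · simpa using hinv0.neg
      · filter_upwards [hpos] with n hn
        simp only [Set.mem_compl_iff, Set.mem_singleton_iff]
        have h2 : 0 < 1 / ginv g n := by positivity
        intro h
        exact absurd (neg_eq_zero.mp h) (ne_of_gt h2)
    have := hs.comp harg
    refine this.congr' ?_
    filter_upwards [hpos] with n hn
    have h1 : -1 / ginv g n = -(1 / ginv g n) := by ring
    rw [h1, Function.comp_apply, slope_def_field, Real.exp_zero, sub_zero, div_neg,
      ← neg_div, neg_sub]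
  -- Step 7: n / ginv n → c
  have hratio : Tendsto (fun n : ℕ => (n : ℝ) / ginv g n) atTop (nhds c) := by
    have h1 : Tendsto (fun n : ℕ => ((n : ℝ) * tailP g n) / ((1 - Real.exp (-1 / ginv g n)) / (1 / ginv g n)))
        atTop (nhds (c / 1)) := htail.div hslope one_ne_zero
    rw [div_one] at h1
    refine h1.congr' ?_
    filter_upwards [hpos] with n hn
    have he : Real.exp (-1 / ginv g n) < 1 := by
      rw [Real.exp_lt_one_iff]
      have : 0 < 1 / ginv g n := by positivity
      rw [neg_div]; linarith
    have hne : (1 : ℝ) - Real.exp (-1 / ginv g n) ≠ 0 := by linarith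
    have hG : ginv g n ≠ 0 := ne_of_gt hn
    simp only [tailP, if_neg hG]
    field_simp
    have hne' : (1:ℝ) - Real.exp (-(ginv g n)⁻¹) ≠ 0 := by simpa [neg_div] using hne
    calc _ = (n:ℝ) * ((1 - Real.exp (-(ginv g n)⁻¹)) * (1 - Real.exp (-(ginv g n)⁻¹))⁻¹) := by ring
      _ = n := by rw [mul_inv_cancel₀ hne', mul_one]
  -- Step 8: n / ginv (n+1) → c
  have hratio1 : Tendsto (fun m : ℕ => (m : ℝ) / ginv g (m + 1)) atTop (nhds c) := by
    have hA : Tendsto (fun m : ℕ => ((m + 1 : ℕ) : ℝ) / ginv g (m + 1)) atTop (nhds c) :=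
      hratio.comp (tendsto_add_atTop_nat 1)
    have hB : Tendsto (fun m : ℕ => (m : ℝ) / ((m : ℝ) + 1)) atTop (nhds 1) := by
      have h0 : Tendsto (fun m : ℕ => ((m : ℝ) + 1)⁻¹) atTop (nhds 0) :=
        tendsto_inv_atTop_zero.comp
          (tendsto_atTop_add_const_right _ 1 tendsto_natCast_atTop_atTop)
      have this : Tendsto (fun m : ℕ => (1:ℝ) - ((m : ℝ) + 1)⁻¹) atTop (nhds (1 - 0)) :=
        tendsto_const_nhds.sub h0
      rw [sub_zero] at this
      refine this.congr ?_
      intro m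
      have hm : ((m : ℝ) + 1) ≠ 0 := by positivity
      field_simp
      ring
    have := hB.mul hA
    rw [one_mul] at this
    refine this.congr ?_
    intro m
    push_cast
    have hm : ((m : ℝ) + 1) ≠ 0 := by positivity
    field_simp
  -- Step 9: squeeze
  have hL : Tendsto (fun x : ℝ => ((g x : ℝ)) / ginv g (g x + 1)) atTop (nhds c) :=
    hratio1.comp hinf
  have hU : Tendsto (fun x : ℝ => ((g x : ℝ)) / ginv g (g x)) atTop (nhds c) :=
    hratio.comp hinf
  obtain ⟨N, hN⟩ := eventually_atTop.mp hpos
  have hgxN : ∀ᶠ x : ℝ in atTop, N ≤ g x := hinf.eventually_ge_atTop N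
  refine tendsto_of_tendsto_of_tendsto_of_le_of_le' hL hU ?_ ?_
  · -- lower bound: g x / ginv (g x + 1) ≤ g x / x
    filter_upwards [eventually_gt_atTop (0:ℝ)] with x hx
    have hx0 : (0:ℝ) ≤ x := le_of_lt hx
    have hlt : x < ginv g (g x + 1) := by
      by_contra h
      push_neg at h
      have := (ginv_le_iff g hmono hrc hinf hx0).mp h
      omega
    exact div_le_div_of_nonneg_left (by positivity) hx (le_of_lt hlt)
  · -- upper bound: g x / x ≤ g x / ginv (g x)
    filter_upwards [eventually_gt_atTop (0:ℝ), hgxN] with x hx hgN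
    have hx0 : (0:ℝ) ≤ x := le_of_lt hx
    have hle : ginv g (g x) ≤ x := ginv_le g hx0 le_rfl
    have hp : 0 < ginv g (g x) := hN _ hgN
    exact div_le_div_of_nonneg_left (by positivity) hp hle
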